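/- arXiv:2107.11588 — 3 statements merged into one kernel-verified Lean document; each statement's English description precedes it below -/
import Mathlib

section
/- Let a_1,...,a_M > 0 and b_1,...,b_M ≥ 0, and for ρ > 0 consider minimizing F_ρ(p) = ρ·Σ_m a_m²/p_m + Σ_m b_m p_m over the open probability simplex, with optimizer p*(ρ). As ρ → ∞, p*_m(ρ) → a_m/(Σ_k a_k) for every m. -/
open Finset

theorem optimizer_tends_to_importance_aware
    (M : ℕ) (a b : Fin M → ℝ) (ha : ∀ m, 0 < a m) (hb : ∀ m, 0 ≤ b m)
    (pstar : ℝ → Fin M → ℝ)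
    (hfeas : ∀ ρ : ℝ, 0 < ρ → (∀ m, 0 < pstar ρ m) ∧ (∑ m, pstar ρ m = 1))
    (hopt : ∀ ρ : ℝ, 0 < ρ → ∀ q : Fin M → ℝ, (∀ m, 0 < q m) → (∑ m, q m = 1) →
      ρ * ∑ m, (a m) ^ 2 / pstar ρ m + ∑ m, b m * pstar ρ m ≤
        ρ * ∑ m, (a m) ^ 2 / q m + ∑ m, b m * q m) :
    ∀ m, Filter.Tendsto (fun ρ => pstar ρ m) Filter.atTop
      (nhds (a m / ∑ k, a k)) := by
  intro m
  have hne : Nonempty (Fin M) := ⟨m⟩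
  set S : ℝ := ∑ k, a k with hS
  have hSpos : 0 < S := Finset.sum_pos (fun k _ => ha k) univ_nonempty
  set C : ℝ := ∑ k, b k with hC
  have hCnn : 0 ≤ C := Finset.sum_nonneg fun k _ => hb k
  have key : ∀ ρ : ℝ, 0 < ρ → (a m - S * pstar ρ m) ^ 2 ≤ C / ρ := by
    intro ρ hρ
    obtain ⟨hp, hsum⟩ := hfeas ρ hρ
    set p := pstar ρ with hpdef
    have hq : ∀ k, 0 < a k / S := fun k => div_pos (ha k) hSpos
    have hqsum : ∑ k, a k / S = 1 := by
      rw [← Finset.sum_div]; exact div_self hSpos.ne'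
    have hO := hopt ρ hρ (fun k => a k / S) hq hqsum
    have hqval : ∑ k, (a k) ^ 2 / (a k / S) = S ^ 2 := by
      have h : ∀ k : Fin M, (a k) ^ 2 / (a k / S) = a k * S := by
        intro k
        rw [div_div_eq_mul_div, sq, mul_assoc, mul_div_assoc,
          mul_div_cancel_left₀ _ (ha k).ne']
      rw [Finset.sum_congr rfl fun k _ => h k, ← Finset.sum_mul, sq]
    have hbq : ∑ k, b k * (a k / S) ≤ C := by
      apply Finset.sum_le_sum
      intro k _
      have h1 : a k / S ≤ 1 := by
        rw [div_le_one hSpos]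
        exact Finset.single_le_sum (fun i _ => (ha i).le) (mem_univ k)
      nlinarith [hb k, hq k]
    have hbp : 0 ≤ ∑ k, b k * p k :=
      Finset.sum_nonneg fun k _ => mul_nonneg (hb k) (hp k).le
    have hmain : ρ * (∑ k, (a k) ^ 2 / p k - S ^ 2) ≤ C := by
      rw [hqval] at hO; nlinarith
    have hid : ∑ k, (a k - S * p k) ^ 2 / p k = ∑ k, (a k) ^ 2 / p k - S ^ 2 := by
      have h : ∀ k : Fin M, (a k - S * p k) ^ 2 / p k
          = (a k) ^ 2 / p k - 2 * S * a k + S ^ 2 * p k := by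
        intro k
        field_simp [(hp k).ne']
        ring
      rw [Finset.sum_congr rfl fun k _ => h k]
      rw [Finset.sum_add_distrib, Finset.sum_sub_distrib, ← Finset.mul_sum,
        ← Finset.mul_sum, hsum, ← hS]
      ring
    have hterm : (a m - S * p m) ^ 2 / p m ≤ ∑ k, (a k - S * p k) ^ 2 / p k :=
      Finset.single_le_sum (f := fun k => (a k - S * p k) ^ 2 / p k)
        (fun k _ => div_nonneg (sq_nonneg _) (hp k).le) (mem_univ m)
    have hpm1 : p m ≤ 1 := by
      rw [← hsum]
      exact Finset.single_le_sum (fun k _ => (hp k).le) (mem_univ m)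
    have hDnn : 0 ≤ ∑ k, (a k) ^ 2 / p k - S ^ 2 := by
      rw [← hid]
      exact Finset.sum_nonneg fun k _ => div_nonneg (sq_nonneg _) (hp k).le
    have h2 : (a m - S * p m) ^ 2 ≤ ∑ k, (a k) ^ 2 / p k - S ^ 2 := by
      rw [← hid]
      calc (a m - S * p m) ^ 2 = ((a m - S * p m) ^ 2 / p m) * p m :=
            (div_mul_cancel₀ _ (hp m).ne').symm
        _ ≤ (∑ k, (a k - S * p k) ^ 2 / p k) * 1 := by
            apply mul_le_mul hterm hpm1 (hp m).le
            rw [hid]; exact hDnn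
        _ = _ := mul_one _
    rw [le_div_iff₀ hρ]
    nlinarith
  rw [Metric.tendsto_atTop]
  intro ε hε
  refine ⟨C / (S ^ 2 * ε ^ 2) + 1, ?_⟩
  intro ρ hρ
  have hden : 0 < S ^ 2 * ε ^ 2 := by positivity
  have hρ0 : 0 < ρ := lt_of_lt_of_le (by positivity) hρ
  have hcan : C / (S ^ 2 * ε ^ 2) * (S ^ 2 * ε ^ 2) = C :=
    div_mul_cancel₀ _ hden.ne'
  have h1 : C / ρ < S ^ 2 * ε ^ 2 := by
    rw [div_lt_iff₀ hρ0]
    nlinarith [div_nonneg hCnn hden.le]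
  have h3 : (a m - S * pstar ρ m) ^ 2 < S ^ 2 * ε ^ 2 :=
    lt_of_le_of_lt (key ρ hρ0) h1
  rw [Real.dist_eq]
  have h5 : |a m - S * pstar ρ m| < S * ε := by
    have hSe : 0 ≤ S * ε := by positivity
    have : (a m - S * pstar ρ m) ^ 2 < (S * ε) ^ 2 := by nlinarith
    exact abs_lt_of_sq_lt_sq this hSe
  have h6 : pstar ρ m - a m / S = -(a m - S * pstar ρ m) / S := by
    field_simp
    ring
  rw [h6, abs_div, abs_neg, abs_of_pos hSpos, div_lt_iff₀ hSpos]
  linarith [h5]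
end

section
/- Let L be ℓ-smooth and μ-strongly convex with 2μχ > 1, and let (Δ_t) be a nonnegative sequence satisfying Δ_{t+1} ≤ (1 − 2μη_t)Δ_t + (ℓη_t²/2)G² with η_t = χ/(t+ν) ≤ 1/(2μ) and ν ≥ 1. Then Δ_t ≤ ζ/(t+ν) for all t ≥ t₀, where ζ = max{ ℓχ²G²/(2(2μχ−1)), (t₀+ν)Δ_{t₀} }. -/
theorem sgd_one_over_t_convergence
    (μ χ ℓ G ν : ℝ) (hμ : 0 < μ) (hχ : 0 < χ) (hℓ : 0 < ℓ) (hG : 0 < G)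
    (hν : 1 ≤ ν) (hμχ : 1 < 2 * μ * χ)
    (η : ℕ → ℝ) (hη : ∀ t, η t = χ / (t + ν))
    (hηsmall : ∀ t, η t ≤ 1 / (2 * μ))
    (Δ : ℕ → ℝ) (hΔ : ∀ t, 0 ≤ Δ t)
    (t₀ : ℕ)
    (hrec : ∀ t : ℕ, t₀ ≤ t →
      Δ (t + 1) ≤ (1 - 2 * μ * η t) * Δ t + ℓ * (η t) ^ 2 / 2 * G ^ 2)
    (ζ : ℝ)
    (hζ : ζ = max (ℓ * χ ^ 2 * G ^ 2 / (2 * (2 * μ * χ - 1))) ((t₀ + ν) * Δ t₀)) :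
    ∀ t : ℕ, t₀ ≤ t → Δ t ≤ ζ / (t + ν) := by
  have hζ1 : ℓ * χ ^ 2 * G ^ 2 / 2 ≤ (2 * μ * χ - 1) * ζ := by
    have h1 : ℓ * χ ^ 2 * G ^ 2 / (2 * (2 * μ * χ - 1)) ≤ ζ := hζ ▸ le_max_left _ _
    have h2 : (0:ℝ) < 2 * μ * χ - 1 := by linarith
    rw [div_le_iff₀ (by positivity)] at h1
    nlinarith
  intro t ht
  induction t, ht using Nat.le_induction with
  | base =>
    have hpos : (0:ℝ) < (t₀ : ℝ) + ν := by positivity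
    rw [le_div_iff₀ hpos]
    have : (t₀ + ν) * Δ t₀ ≤ ζ := hζ ▸ le_max_right _ _
    linarith [this]
  | succ t ht ih =>
    have hs : (0:ℝ) < (t : ℝ) + ν := by positivity
    have hs1 : (1:ℝ) ≤ (t : ℝ) + ν := by
      have : (0:ℝ) ≤ (t:ℝ) := Nat.cast_nonneg t
      linarith
    have hη0 : η t = χ / ((t:ℝ) + ν) := hη t
    have hcoeff : 0 ≤ 1 - 2 * μ * η t := by
      have := hηsmall t
      have h2μ : (0:ℝ) < 2 * μ := by linarith
      rw [le_div_iff₀ h2μ] at this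
      linarith
    have hζ0 : 0 ≤ ζ := le_trans (mul_nonneg (by positivity) (hΔ t₀)) (hζ ▸ le_max_right _ _)
    have hstep : Δ (t + 1) ≤ (1 - 2 * μ * η t) * (ζ / ((t:ℝ) + ν)) + ℓ * (η t) ^ 2 / 2 * G ^ 2 := by
      have := hrec t ht
      nlinarith [mul_le_mul_of_nonneg_left ih hcoeff]
    have hkey : (1 - 2 * μ * η t) * (ζ / ((t:ℝ) + ν)) + ℓ * (η t) ^ 2 / 2 * G ^ 2
        ≤ ζ / ((t:ℝ) + 1 + ν) := by
      rw [hη0]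
      set s : ℝ := (t:ℝ) + ν with hsdef
      have hs2 : (0:ℝ) < s ^ 2 := by positivity
      have hsp1 : (0:ℝ) < s + 1 := by linarith
      have hlhs : (1 - 2 * μ * (χ / s)) * (ζ / s) + ℓ * (χ / s) ^ 2 / 2 * G ^ 2
          = ((s - 2 * μ * χ) * ζ + ℓ * χ ^ 2 * G ^ 2 / 2) / s ^ 2 := by
        field_simp
      rw [hlhs]
      have hnum : (s - 2 * μ * χ) * ζ + ℓ * χ ^ 2 * G ^ 2 / 2 ≤ (s - 1) * ζ := by
        nlinarith
      have h2 : ((s - 1) * ζ) / s ^ 2 ≤ ζ / (s + 1) := by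
        rw [div_le_div_iff₀ hs2 hsp1]
        nlinarith
      have h3 : ((s - 2 * μ * χ) * ζ + ℓ * χ ^ 2 * G ^ 2 / 2) / s ^ 2 ≤ ((s - 1) * ζ) / s ^ 2 := by
        gcongr
      have : ((t:ℝ) + 1 + ν) = s + 1 := by rw [hsdef]; ring
      rw [this]
      exact le_trans h3 h2
    calc Δ (t + 1) ≤ _ := hstep
      _ ≤ ζ / ((t:ℝ) + 1 + ν) := hkey
      _ = ζ / (((t+1 : ℕ):ℝ) + ν) := by push_cast; ring_nf
end

section
/- Let a_1,...,a_M > 0, b_1,...,b_M ≥ 0, and let p* be the minimizer of F(p) = Σ_m a_m/p_m + b_m p_m over the open probability simplex. If a_i ≥ a_j and b_i ≤ b_j then p*_i ≥ p*_j. -/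
open Finset

theorem optimal_probability_monotone
    (M : ℕ) (a b : Fin M → ℝ) (ha : ∀ m, 0 < a m) (hb : ∀ m, 0 ≤ b m)
    (pstar : Fin M → ℝ) (hpos : ∀ m, 0 < pstar m) (hsum : ∑ m, pstar m = 1)
    (hopt : ∀ p : Fin M → ℝ, (∀ m, 0 < p m) → (∑ m, p m = 1) →
      ∑ m, (a m / pstar m + b m * pstar m) ≤ ∑ m, (a m / p m + b m * p m))
    (i j : Fin M) (hab : a j ≤ a i) (hba : b i ≤ b j) :
    pstar j ≤ pstar i := by
  by_contra hcon
  push_neg at hcon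
  have hij : i ≠ j := by rintro rfl; exact lt_irrefl _ hcon
  set s : ℝ := (pstar i + pstar j) / 2 with hs
  have hspos : 0 < s := by have := hpos i; have := hpos j; positivity
  set q : Fin M → ℝ := Function.update (Function.update pstar i s) j s with hq
  have hqj : q j = s := by simp [hq]
  have hqi : q i = s := by
    simp [hq, Function.update, hij]
  have hqm : ∀ m, m ≠ i → m ≠ j → q m = pstar m := by
    intro m h1 h2; simp [hq, Function.update, h1, h2]
  have hqpos : ∀ m, 0 < q m := by
    intro m
    by_cases h1 : m = j
    · subst h1; rw [hqj]; exact hspos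
    by_cases h2 : m = i
    · subst h2; rw [hqi]; exact hspos
    · rw [hqm m h2 h1]; exact hpos m
  -- decomposition lemma
  have hjmem : j ∈ (univ : Finset (Fin M)).erase i :=
    Finset.mem_erase.mpr ⟨(Ne.symm hij), mem_univ j⟩
  have key : ∀ F : Fin M → ℝ, ∑ m, F m
      = F i + (F j + ∑ m ∈ ((univ : Finset (Fin M)).erase i).erase j, F m) := by
    intro F
    rw [Finset.add_sum_erase _ F hjmem, Finset.add_sum_erase _ F (mem_univ i)]
  have hrestq : ∀ F G : Fin M → ℝ, (∀ m, m ≠ i → m ≠ j → F m = G m) →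
      ∑ m ∈ ((univ : Finset (Fin M)).erase i).erase j, F m
      = ∑ m ∈ ((univ : Finset (Fin M)).erase i).erase j, G m := by
    intro F G h
    refine Finset.sum_congr rfl ?_
    intro m hm
    have h2 := Finset.mem_erase.mp hm
    have h1 := Finset.mem_erase.mp h2.2
    exact h m h1.1 h2.1
  have hqsum : ∑ m, q m = 1 := by
    have h1 := key q
    have h2 := key pstar
    rw [hrestq q pstar hqm] at h1
    rw [h2] at hsum
    rw [h1, hqi, hqj]
    rw [hs]
    linarith
  have hle := hopt q hqpos hqsum
  rw [key (fun m => a m / pstar m + b m * pstar m),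
      key (fun m => a m / q m + b m * q m)] at hle
  rw [hrestq (fun m => a m / q m + b m * q m) (fun m => a m / pstar m + b m * pstar m)
      (by intro m h1 h2; simp only [hqm m h1 h2])] at hle
  simp only [hqi, hqj] at hle
  -- now hle : a i / pstar i + b i * pstar i + (a j / pstar j + b j * pstar j + R)
  --           ≤ a i / s + b i * s + (a j / s + b j * s + R)
  have hpi := hpos i
  have hpj := hpos j
  have hai := ha i
  have haj := ha j
  set X : ℝ := (a i / pstar i + b i * pstar i + (a j / pstar j + b j * pstar j))
    - (a i / s + b i * s + (a j / s + b j * s)) with hX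
  have hmul : X * (pstar i * pstar j * s)
      = a i * (s - pstar i) * pstar j + a j * (s - pstar j) * pstar i
        + (b i * (pstar i - s) + b j * (pstar j - s)) * (pstar i * pstar j * s) := by
    rw [hX]
    field_simp
    ring
  have hd : 0 < pstar j - pstar i := sub_pos.mpr hcon
  have h1 : 0 < a i * pstar j - a j * pstar i := by
    nlinarith [mul_nonneg (sub_nonneg.mpr hab) hpj.le, mul_pos haj hd]
  have hpoly : 0 < a i * (s - pstar i) * pstar j + a j * (s - pstar j) * pstar i
        + (b i * (pstar i - s) + b j * (pstar j - s)) * (pstar i * pstar j * s) := by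
    rw [hs]
    nlinarith [mul_pos h1 hd,
      mul_nonneg (sub_nonneg.mpr hba)
        (mul_nonneg (mul_nonneg (mul_nonneg hpi.le hpj.le) (by linarith : (0:ℝ) ≤ pstar i + pstar j)) hd.le)]
  have hXpos : 0 < X := by
    by_contra hX0
    push_neg at hX0
    nlinarith [mul_pos (mul_pos hpi hpj) hspos]
  rw [hX] at hXpos
  linarith
end
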